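/- If p = p(n) satisfies p·n^{7/8} → 0 as n → ∞, then for G = G(n,p) the probability that τ(G) = n − max γ(H) tends to 1 as n → ∞, where the maximum is taken over all induced subgraphs H of G in which every connected component is either an isolated vertex or a cycle of length 4. -/

import Mathlib

open MeasureTheory ProbabilityTheory Filter Real

namespace RandomBipartiteDecomposition

/-- The set of edges of the complete bipartite graph with vertex classes `A` and `B`. -/
def bicliqueEdges {V : Type*} (A B : Finset V) : Set (Sym2 V) :=
  {e | ∃ a ∈ A, ∃ b ∈ B, e = s(a, b)}

/-- `A`, `B` are the vertex classes of a complete bipartite subgraph of `G`. -/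
def IsBicliqueIn {V : Type*} (G : SimpleGraph V) (A B : Finset V) : Prop :=
  A.Nonempty ∧ B.Nonempty ∧ Disjoint A B ∧ ∀ a ∈ A, ∀ b ∈ B, G.Adj a b

/-- A complete bipartite subgraph is nontrivial if both classes have at least 2 vertices. -/
def IsNontrivialBicliqueIn {V : Type*} (G : SimpleGraph V) (A B : Finset V) : Prop :=
  2 ≤ A.card ∧ 2 ≤ B.card ∧ Disjoint A B ∧ ∀ a ∈ A, ∀ b ∈ B, G.Adj a b

/-- `P` lists `m` pairwise edge-disjoint complete bipartite subgraphs of `G` such that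
every edge of `G` belongs to exactly one of them. -/
def IsBicliqueDecomp {V : Type*} (G : SimpleGraph V) (m : ℕ)
    (P : Fin m → Finset V × Finset V) : Prop :=
  (∀ i, IsBicliqueIn G (P i).1 (P i).2) ∧
  (∀ i j, i ≠ j →
    Disjoint (bicliqueEdges (P i).1 (P i).2) (bicliqueEdges (P j).1 (P j).2)) ∧
  (⋃ i, bicliqueEdges (P i).1 (P i).2) = G.edgeSet

/-- As above but with all complete bipartite subgraphs nontrivial. -/
def IsNontrivialBicliqueDecomp {V : Type*} (G : SimpleGraph V) (m : ℕ)
    (P : Fin m → Finset V × Finset V) : Prop :=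
  (∀ i, IsNontrivialBicliqueIn G (P i).1 (P i).2) ∧
  (∀ i j, i ≠ j →
    Disjoint (bicliqueEdges (P i).1 (P i).2) (bicliqueEdges (P j).1 (P j).2)) ∧
  (⋃ i, bicliqueEdges (P i).1 (P i).2) = G.edgeSet

/-- `τ(G)`: the minimum number of pairwise edge-disjoint complete bipartite subgraphs
of `G` so that each edge of `G` belongs to exactly one of them. -/
noncomputable def tau {V : Type*} (G : SimpleGraph V) : ℕ :=
  sInf {m | ∃ P : Fin m → Finset V × Finset V, IsBicliqueDecomp G m P}

/-- `τ'(G)`: the minimum number of pairwise edge-disjoint *nontrivial* complete bipartite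
subgraphs of `G` covering all edges of `G`; `⊤` if there is no such cover. -/
noncomputable def tau' {V : Type*} (G : SimpleGraph V) : ℕ∞ :=
  sInf {t : ℕ∞ | ∃ m : ℕ, t = m ∧ ∃ P : Fin m → Finset V × Finset V,
    IsNontrivialBicliqueDecomp G m P}

/-- `S` is an independent set of `G`. -/
def IsIndepFinset {V : Type*} (G : SimpleGraph V) (S : Finset V) : Prop :=
  ∀ a ∈ S, ∀ b ∈ S, ¬ G.Adj a b

/-- `α(G)`: the maximum size of an independent set of `G`. -/
noncomputable def alpha {V : Type*} (G : SimpleGraph V) : ℕ :=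
  sSup {k | ∃ S : Finset V, S.card = k ∧ IsIndepFinset G S}

/-- `S` induces in `G` a complete bipartite graph with nonempty vertex classes `A`, `B`. -/
def IsInducedCompleteBipartite {V : Type*} (G : SimpleGraph V) (S A B : Finset V) : Prop :=
  A.Nonempty ∧ B.Nonempty ∧ Disjoint A B ∧ (A : Set V) ∪ (B : Set V) = (S : Set V) ∧
  ∀ u ∈ S, ∀ v ∈ S, (G.Adj u v ↔ ((u ∈ A ∧ v ∈ B) ∨ (u ∈ B ∧ v ∈ A)))

/-- `β(G)`: the largest number of vertices of an induced complete bipartite subgraph. -/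
noncomputable def beta {V : Type*} (G : SimpleGraph V) : ℕ :=
  sSup {k | ∃ S A B : Finset V, IsInducedCompleteBipartite G S A B ∧ S.card = k}

/-- The Bernoulli measure on `Bool` giving `true` probability `p`. -/
noncomputable def bernoulliBool (p : ℝ) : Measure Bool :=
  p.toNNReal • Measure.dirac true + (1 - p).toNNReal • Measure.dirac false

instance (p : ℝ) : IsFiniteMeasure (bernoulliBool p) := by
  unfold bernoulliBool; infer_instance

/-- The Erdős–Rényi random graph `G(n,p)`: each unordered pair of vertices flips an
independent `p`-coin. Events about the graph are subsets of the coin-flip space. -/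
noncomputable def erdosRenyi (n : ℕ) (p : ℝ) : Measure (Sym2 (Fin n) → Bool) :=
  Measure.pi fun _ => bernoulliBool p

/-- The simple graph determined by the coin flips `ω`. -/
def graphOf (n : ℕ) (ω : Sym2 (Fin n) → Bool) : SimpleGraph (Fin n) :=
  SimpleGraph.fromEdgeSet {e | ω e = true}

/-- `f(k) = C(n,k) · 2^{-C(k,2)}`, the expected number of independent sets of size `k`
in `G(n,1/2)`. -/
noncomputable def f (n k : ℕ) : ℝ :=
  (n.choose k : ℝ) * (2 : ℝ) ^ (-(k.choose 2 : ℤ))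

/-- `k₀(n)`: the largest `k` with `f(k) ≥ 1`. -/
noncomputable def k0 (n : ℕ) : ℕ := sSup {k | 1 ≤ f n k}

/-- `g(k) = C(n,k+2) · (2^{k+1} - 1) · 2^{-C(k+2,2)}`, the expected number of induced
complete bipartite subgraphs on `k+2` vertices in `G(n,1/2)`. -/
noncomputable def g (n k : ℕ) : ℝ :=
  (n.choose (k + 2) : ℝ) * ((2 : ℝ) ^ (k + 1) - 1) * (2 : ℝ) ^ (-((k + 2).choose 2 : ℤ))

/-- The number of independent sets of size `k` in the graph determined by `ω`. -/
noncomputable def numIndep (n k : ℕ) (ω : Sym2 (Fin n) → Bool) : ℕ :=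
  Set.ncard {S : Finset (Fin n) | S.card = k ∧ IsIndepFinset (graphOf n ω) S}

/-- The number of `m`-element vertex subsets inducing a complete bipartite graph in the
graph determined by `ω`. -/
noncomputable def numBip (n m : ℕ) (ω : Sym2 (Fin n) → Bool) : ℕ :=
  Set.ncard {S : Finset (Fin n) | S.card = m ∧
    ∃ A B : Finset (Fin n), IsInducedCompleteBipartite (graphOf n ω) S A B}

/-- `q` induces a cycle of length 4 in `G`: it has 4 vertices, each with exactly two
neighbours inside `q`. -/
def IsC4 {V : Type*} (G : SimpleGraph V) (q : Finset V) : Prop :=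
  q.card = 4 ∧ ∀ v ∈ q, Set.ncard {u ∈ (q : Set V) | G.Adj v u} = 2

/-- The induced subgraph of `G` on `S` has every connected component either an isolated
vertex or a cycle of length 4; `Q` is the collection of vertex sets of the 4-cycles. -/
def IsC4Config {V : Type*} (G : SimpleGraph V) (S : Finset V) (Q : Finset (Finset V)) : Prop :=
  (∀ q ∈ Q, q ⊆ S ∧ IsC4 G q) ∧
  (∀ q ∈ Q, ∀ q' ∈ Q, q ≠ q' → Disjoint q q') ∧
  (∀ v ∈ S, ∀ u ∈ S, G.Adj v u → ∃ q ∈ Q, v ∈ q ∧ u ∈ q)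

/-- `max γ(H)` over induced subgraphs `H` of `G` all of whose components are isolated
vertices or 4-cycles, where `γ(H) = |V(H)| - #(4-cycles of H)`. -/
noncomputable def gammaMax {V : Type*} (G : SimpleGraph V) : ℕ :=
  sSup {m | ∃ S : Finset V, ∃ Q : Finset (Finset V), IsC4Config G S Q ∧ m = S.card - Q.card}


/-! ### Auxiliary development -/

section Basic
variable {V : Type*} [DecidableEq V]

/-- Finset of edges of the complete bipartite graph with classes `A`, `B`. -/
def ebf (A B : Finset V) : Finset (Sym2 V) := (A ×ˢ B).image fun p => s(p.1, p.2)

lemma mem_ebf {A B : Finset V} {e : Sym2 V} :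
    e ∈ ebf A B ↔ ∃ a ∈ A, ∃ b ∈ B, e = s(a, b) := by
  simp only [ebf, Finset.mem_image, Finset.mem_product, Prod.exists]
  constructor
  · rintro ⟨a, b, ⟨ha, hb⟩, rfl⟩; exact ⟨a, ha, b, hb, rfl⟩
  · rintro ⟨a, ha, b, hb, rfl⟩; exact ⟨a, b, ⟨ha, hb⟩, rfl⟩

lemma coe_ebf (A B : Finset V) : (ebf A B : Set (Sym2 V)) = bicliqueEdges A B := by
  ext e; simp only [Finset.mem_coe, mem_ebf]; rfl

lemma card_ebf {A B : Finset V} (h : Disjoint A B) :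
    (ebf A B).card = A.card * B.card := by
  rw [ebf, Finset.card_image_of_injOn, Finset.card_product]
  rintro ⟨a, b⟩ hab ⟨a', b'⟩ hab' he
  simp only [Finset.coe_product, Set.mem_prod, Finset.mem_coe] at hab hab'
  rcases Sym2.mk_eq_mk_iff.1 he with h1 | h1
  · exact h1
  · exfalso
    have : a = b' := (Prod.ext_iff.1 h1).1
    exact (Finset.disjoint_left.1 h) hab.1 (this ▸ hab'.2)

lemma ebf_vertex_mem {A B : Finset V} {e : Sym2 V} (he : e ∈ ebf A B) :
    ∀ v ∈ e, v ∈ A ∪ B := by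
  obtain ⟨a, ha, b, hb, rfl⟩ := mem_ebf.1 he
  intro v hv
  rcases Sym2.mem_iff.1 hv with rfl | rfl
  · exact Finset.mem_union_left _ ha
  · exact Finset.mem_union_right _ hb

end Basic

section Sparse
variable {n : ℕ}

/-- The sparseness property: no vertex set of size at most 7 spans more edges than
vertices. -/
def Sp (G : SimpleGraph (Fin n)) : Prop :=
  ∀ W : Finset (Fin n), W.card ≤ 7 → ∀ F : Finset (Sym2 (Fin n)),
    (∀ e ∈ F, e ∈ G.edgeSet ∧ ∀ v ∈ e, v ∈ W) → F.card ≤ W.card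

end Sparse

section C4
variable {V : Type*} [DecidableEq V] {G : SimpleGraph V}

lemma exists_bipartition_of_isC4 {q : Finset V} (h : IsC4 G q) :
    ∃ A B : Finset V, A.card = 2 ∧ B.card = 2 ∧ Disjoint A B ∧ A ∪ B = q ∧
      (∀ a ∈ A, ∀ b ∈ B, G.Adj a b) ∧
      (∀ u ∈ q, ∀ v ∈ q, G.Adj u v → s(u, v) ∈ ebf A B) := by
  classical
  obtain ⟨hq4, h2⟩ := h
  have hN : ∀ v ∈ q, (q.filter (fun u => G.Adj v u)).card = 2 := by
    intro v hv
    have := h2 v hv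
    have hset : {u ∈ (↑q : Set V) | G.Adj v u} = ↑(q.filter (fun u => G.Adj v u)) := by
      ext u; simp
    rw [hset, Set.ncard_coe_finset] at this
    exact this
  have hqne : q.Nonempty := Finset.card_pos.1 (by omega)
  obtain ⟨a, ha⟩ := hqne
  have hNa : (q.filter (fun u => G.Adj a u)).card = 2 := hN a ha
  have haN : a ∉ q.filter (fun u => G.Adj a u) := by
    simp [G.irrefl]
  -- the unique non-neighbour a' of a in q
  have hins : insert a (q.filter (fun u => G.Adj a u)) ⊆ q := by
    intro x hx
    rcases Finset.mem_insert.1 hx with rfl | hx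
    · exact ha
    · exact Finset.mem_of_mem_filter _ hx
  have hinscard : (insert a (q.filter (fun u => G.Adj a u))).card = 3 := by
    rw [Finset.card_insert_of_notMem haN, hNa]
  have hMcard : (q \ insert a (q.filter (fun u => G.Adj a u))).card = 1 := by
    rw [Finset.card_sdiff_of_subset hins, hinscard, hq4]
  obtain ⟨a', hM⟩ := Finset.card_eq_one.1 hMcard
  have ha'q : a' ∈ q := by
    have : a' ∈ q \ insert a (q.filter (fun u => G.Adj a u)) := by rw [hM]; simp
    exact (Finset.mem_sdiff.1 this).1
  have ha'ins : a' ∉ insert a (q.filter (fun u => G.Adj a u)) := by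
    have : a' ∈ q \ insert a (q.filter (fun u => G.Adj a u)) := by rw [hM]; simp
    exact (Finset.mem_sdiff.1 this).2
  have ha'ne : a' ≠ a := fun hcon => ha'ins (by simp [hcon])
  have ha'nadj : ¬ G.Adj a a' := fun hcon => ha'ins (by simp [ha'q, hcon])
  set A : Finset V := {a, a'} with hA
  have hAq : A ⊆ q := by
    intro x hx; rcases Finset.mem_insert.1 hx with rfl | hx
    · exact ha
    · rw [Finset.mem_singleton.1 hx]; exact ha'q
  have hAcard : A.card = 2 := by
    rw [hA, Finset.card_insert_of_notMem (by simp [ha'ne.symm]), Finset.card_singleton]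
  set B : Finset V := q \ A with hB
  have hBcard : B.card = 2 := by
    rw [hB, Finset.card_sdiff_of_subset hAq, hq4, hAcard]
  have hdisj : Disjoint A B := Finset.disjoint_sdiff
  have hunion : A ∪ B = q := Finset.union_sdiff_of_subset hAq
  -- neighbourhoods of a and a' are both B
  have hNB : ∀ x ∈ A, q.filter (fun u => G.Adj x u) = B := by
    intro x hx
    have hxq : x ∈ q := hAq hx
    apply Finset.eq_of_subset_of_card_le
    · intro u hu
      obtain ⟨huq, hadj⟩ := Finset.mem_filter.1 hu
      rw [hB, Finset.mem_sdiff]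
      refine ⟨huq, fun huA => ?_⟩
      rcases Finset.mem_insert.1 hx with rfl | hx'
      · rcases Finset.mem_insert.1 huA with rfl | hu'
        · exact G.irrefl hadj
        · rw [Finset.mem_singleton.1 hu'] at hadj; exact ha'nadj hadj
      · rw [Finset.mem_singleton.1 hx'] at hadj
        rcases Finset.mem_insert.1 huA with rfl | hu'
        · exact ha'nadj (G.adj_symm hadj)
        · rw [Finset.mem_singleton.1 hu'] at hadj; exact G.irrefl hadj
    · rw [hBcard, hN x hxq]
  have hadjAB : ∀ x ∈ A, ∀ b ∈ B, G.Adj x b := by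
    intro x hx b hb
    have : b ∈ q.filter (fun u => G.Adj x u) := by rw [hNB x hx]; exact hb
    exact (Finset.mem_filter.1 this).2
  -- neighbourhood of any b in B is A
  have hNA : ∀ b ∈ B, q.filter (fun u => G.Adj b u) = A := by
    intro b hb
    have hbq : b ∈ q := (Finset.sdiff_subset) hb
    have hsub : A ⊆ q.filter (fun u => G.Adj b u) := by
      intro x hx
      exact Finset.mem_filter.2 ⟨hAq hx, G.adj_symm (hadjAB x hx b hb)⟩
    have := Finset.eq_of_subset_of_card_le hsub (by rw [hN b hbq, hAcard])
    exact this.symm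
  refine ⟨A, B, hAcard, hBcard, hdisj, hunion, hadjAB, ?_⟩
  intro u hu v hv hadj
  have huq := hu; have hvq := hv
  rcases Finset.mem_union.1 (hunion ▸ hu : u ∈ A ∪ B) with huA | huB
  · have : v ∈ B := by
      have : v ∈ q.filter (fun w => G.Adj u w) := Finset.mem_filter.2 ⟨hv, hadj⟩
      rwa [hNB u huA] at this
    exact mem_ebf.2 ⟨u, huA, v, this, rfl⟩
  · have hvA : v ∈ A := by
      have : v ∈ q.filter (fun w => G.Adj u w) := Finset.mem_filter.2 ⟨hv, hadj⟩
      rwa [hNA u huB] at this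
    have : s(v, u) ∈ ebf A B := mem_ebf.2 ⟨v, hvA, u, huB, rfl⟩
    rwa [Sym2.eq_swap] at this

end C4

section Upper
variable {n : ℕ}

lemma card_mem_tauSet {V : Type*} {G : SimpleGraph V} {ι : Type*} [Fintype ι]
    (P : ι → Finset V × Finset V)
    (h1 : ∀ i, IsBicliqueIn G (P i).1 (P i).2)
    (h2 : ∀ i j, i ≠ j →
      Disjoint (bicliqueEdges (P i).1 (P i).2) (bicliqueEdges (P j).1 (P j).2))
    (h3 : (⋃ i, bicliqueEdges (P i).1 (P i).2) = G.edgeSet) :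
    Fintype.card ι ∈ {m | ∃ P' : Fin m → Finset V × Finset V, IsBicliqueDecomp G m P'} := by
  have e : Fin (Fintype.card ι) ≃ ι := (Fintype.equivFin ι).symm
  refine ⟨fun k => P (e k), fun i => h1 _, fun i j hij => h2 _ _ (fun hc => hij (e.injective hc)), ?_⟩
  rw [← h3]
  exact e.surjective.iUnion_comp (fun i => bicliqueEdges (P i).1 (P i).2)

lemma tau_le_card {V : Type*} {G : SimpleGraph V} {ι : Type*} [Fintype ι]
    (P : ι → Finset V × Finset V)
    (h1 : ∀ i, IsBicliqueIn G (P i).1 (P i).2)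
    (h2 : ∀ i j, i ≠ j →
      Disjoint (bicliqueEdges (P i).1 (P i).2) (bicliqueEdges (P j).1 (P j).2))
    (h3 : (⋃ i, bicliqueEdges (P i).1 (P i).2) = G.edgeSet) :
    tau G ≤ Fintype.card ι :=
  Nat.sInf_le (card_mem_tauSet P h1 h2 h3)

lemma tau_le_config' {G : SimpleGraph (Fin n)} {S : Finset (Fin n)}
    {Q : Finset (Finset (Fin n))} (h : IsC4Config G S Q) :
    ∃ m ∈ {m | ∃ P' : Fin m → Finset (Fin n) × Finset (Fin n), IsBicliqueDecomp G m P'},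
      m ≤ (Finset.univ \ S).card + Q.card := by
  classical
  obtain ⟨hQ1, hQ2, hQ3⟩ := h
  choose A B hA2 hB2 hABdisj hABun hABadj hABcov using
    fun (q : {q // q ∈ Q}) => exists_bipartition_of_isC4 (hQ1 q.1 q.2).2
  set Bv : Fin n → Finset (Fin n) :=
    fun v => Finset.univ.filter (fun u => G.Adj v u ∧ (u ∈ S ∨ v < u)) with hBv
  have mem_Bv : ∀ {v u : Fin n}, u ∈ Bv v ↔ G.Adj v u ∧ (u ∈ S ∨ v < u) := by
    intro v u; simp [hBv]
  set D' : Finset (Fin n) := (Finset.univ \ S).filter (fun v => (Bv v).Nonempty) with hD'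
  have hD'S : ∀ v ∈ D', v ∉ S := by
    intro v hv
    exact (Finset.mem_sdiff.1 (Finset.mem_of_mem_filter _ hv)).2
  set P : ({v // v ∈ D'} ⊕ {q // q ∈ Q}) → Finset (Fin n) × Finset (Fin n) :=
    Sum.elim (fun v => ({v.1}, Bv v.1)) (fun q => (A q, B q)) with hP
  -- endpoints of biclique edges of the C4 parts lie in the corresponding q
  have hqmem : ∀ (q : {q // q ∈ Q}) {e : Sym2 (Fin n)},
      e ∈ bicliqueEdges (A q) (B q) → ∀ v ∈ e, v ∈ q.1 := by
    intro q e he v hv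
    rw [← coe_ebf, Finset.mem_coe] at he
    have := ebf_vertex_mem he v hv
    rwa [hABun q] at this
  have h1 : ∀ i, IsBicliqueIn G (P i).1 (P i).2 := by
    rintro (⟨v, hv⟩ | ⟨q, hq⟩) <;> simp only [hP, Sum.elim_inl, Sum.elim_inr]
    · refine ⟨Finset.singleton_nonempty _, (Finset.mem_filter.1 hv).2, ?_, ?_⟩
      · rw [Finset.disjoint_singleton_left, mem_Bv]
        rintro ⟨hadj, -⟩; exact G.irrefl hadj
      · intro a ha b hb
        rw [Finset.mem_singleton.1 ha]
        exact (mem_Bv.1 hb).1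
    · exact ⟨Finset.card_pos.1 (by rw [hA2 ⟨q, hq⟩]; norm_num),
        Finset.card_pos.1 (by rw [hB2 ⟨q, hq⟩]; norm_num),
        hABdisj ⟨q, hq⟩, hABadj ⟨q, hq⟩⟩
  have h2 : ∀ i j, i ≠ j →
      Disjoint (bicliqueEdges (P i).1 (P i).2) (bicliqueEdges (P j).1 (P j).2) := by
    rintro (⟨v, hv⟩ | ⟨q, hq⟩) (⟨w, hw⟩ | ⟨q', hq'⟩) hij <;>
      rw [Set.disjoint_left] <;> intro e he he' <;>
      simp only [hP, Sum.elim_inl, Sum.elim_inr] at he he'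
    · -- two stars
      have hvw : v ≠ w := by
        intro hc; exact hij (by simp [hc])
      obtain ⟨a, ha, b, hb, rfl⟩ := he
      obtain ⟨a', ha', b', hb', heq⟩ := he'
      rw [Finset.mem_singleton] at ha ha'
      subst ha; subst ha'
      rcases (Sym2.mk_eq_mk_iff (p := (a, b)) (q := (a', b'))).1 heq with hh | hh
      · exact hvw (congrArg Prod.fst hh)
      · have h1' : a = b' := congrArg Prod.fst hh
        have h2' : b = a' := congrArg Prod.snd hh
        have hb2 := mem_Bv.1 hb
        have hb'2 := mem_Bv.1 hb'
        rcases hb2.2 with hS | hlt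
        · exact hD'S a' hw (h2' ▸ hS)
        · rcases hb'2.2 with hS | hlt'
          · exact hD'S a hv (h1' ▸ hS)
          · rw [h2'] at hlt; rw [← h1'] at hlt'
            exact absurd hlt (not_lt.2 (le_of_lt hlt'))
    · -- star vs C4
      obtain ⟨a, ha, b, hb, rfl⟩ := he
      rw [Finset.mem_singleton] at ha; subst ha
      have hvq : a ∈ q' := hqmem ⟨q', hq'⟩ he' a (by simp)
      exact hD'S a hv ((hQ1 q' hq').1 hvq)
    · -- C4 vs star
      obtain ⟨a, ha, b, hb, rfl⟩ := he'
      rw [Finset.mem_singleton] at ha; subst ha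
      have hvq : a ∈ q := hqmem ⟨q, hq⟩ he a (by simp)
      exact hD'S a hw ((hQ1 q hq).1 hvq)
    · -- two C4s
      have hqq : q ≠ q' := by
        intro hc; exact hij (by subst hc; rfl)
      obtain ⟨x, hx⟩ : ∃ x, x ∈ e := by
        induction e using Sym2.ind with
        | _ u v' => exact ⟨u, by simp⟩
      have hx1 : x ∈ q := hqmem ⟨q, hq⟩ he x hx
      have hx2 : x ∈ q' := hqmem ⟨q', hq'⟩ he' x hx
      exact Finset.disjoint_left.1 (hQ2 q hq q' hq' hqq) hx1 hx2
  have h3 : (⋃ i, bicliqueEdges (P i).1 (P i).2) = G.edgeSet := by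
    apply Set.Subset.antisymm
    · rintro e he
      obtain ⟨i, hi⟩ := Set.mem_iUnion.1 he
      rcases i with v | q <;> simp only [hP, Sum.elim_inl, Sum.elim_inr] at hi <;>
        obtain ⟨a, ha, b, hb, rfl⟩ := hi <;> rw [SimpleGraph.mem_edgeSet]
      · rw [Finset.mem_singleton] at ha; subst ha
        exact (mem_Bv.1 hb).1
      · exact hABadj q a ha b hb
    · intro e he
      induction e using Sym2.ind with
      | _ x y =>
        rw [SimpleGraph.mem_edgeSet] at he
        apply Set.mem_iUnion.2
        by_cases hxS : x ∈ S
        · by_cases hyS : y ∈ S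
          · obtain ⟨q, hq, hxq, hyq⟩ := hQ3 x hxS y hyS he
            refine ⟨Sum.inr ⟨q, hq⟩, ?_⟩
            simp only [hP, Sum.elim_inr]
            rw [← coe_ebf, Finset.mem_coe]
            exact hABcov ⟨q, hq⟩ x hxq y hyq he
          · have hyB : x ∈ Bv y := mem_Bv.2 ⟨G.adj_symm he, Or.inl hxS⟩
            have hyD : y ∈ D' := by
              rw [hD', Finset.mem_filter, Finset.mem_sdiff]
              exact ⟨⟨Finset.mem_univ _, hyS⟩, ⟨x, hyB⟩⟩
            refine ⟨Sum.inl ⟨y, hyD⟩, ?_⟩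
            simp only [hP, Sum.elim_inl]
            exact ⟨y, by simp, x, hyB, Sym2.eq_swap⟩
        · by_cases hyS : y ∈ S
          · have hxB : y ∈ Bv x := mem_Bv.2 ⟨he, Or.inl hyS⟩
            have hxD : x ∈ D' := by
              rw [hD', Finset.mem_filter, Finset.mem_sdiff]
              exact ⟨⟨Finset.mem_univ _, hxS⟩, ⟨y, hxB⟩⟩
            refine ⟨Sum.inl ⟨x, hxD⟩, ?_⟩
            simp only [hP, Sum.elim_inl]
            exact ⟨x, by simp, y, hxB, rfl⟩
          · rcases lt_or_gt_of_ne (G.ne_of_adj he) with hlt | hlt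
            · have hxB : y ∈ Bv x := mem_Bv.2 ⟨he, Or.inr hlt⟩
              have hxD : x ∈ D' := by
                rw [hD', Finset.mem_filter, Finset.mem_sdiff]
                exact ⟨⟨Finset.mem_univ _, hxS⟩, ⟨y, hxB⟩⟩
              refine ⟨Sum.inl ⟨x, hxD⟩, ?_⟩
              simp only [hP, Sum.elim_inl]
              exact ⟨x, by simp, y, hxB, rfl⟩
            · have hyB : x ∈ Bv y := mem_Bv.2 ⟨G.adj_symm he, Or.inr hlt⟩
              have hyD : y ∈ D' := by
                rw [hD', Finset.mem_filter, Finset.mem_sdiff]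
                exact ⟨⟨Finset.mem_univ _, hyS⟩, ⟨x, hyB⟩⟩
              refine ⟨Sum.inl ⟨y, hyD⟩, ?_⟩
              simp only [hP, Sum.elim_inl]
              exact ⟨y, by simp, x, hyB, Sym2.eq_swap⟩
  refine ⟨_, card_mem_tauSet P h1 h2 h3, ?_⟩
  calc Fintype.card ({v // v ∈ D'} ⊕ {q // q ∈ Q})
      = D'.card + Q.card := by simp
    _ ≤ (Finset.univ \ S).card + Q.card := by
        have : D'.card ≤ (Finset.univ \ S).card := by
          rw [hD']; exact Finset.card_filter_le _ _
        omega

lemma tau_le_config {G : SimpleGraph (Fin n)} {S : Finset (Fin n)}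
    {Q : Finset (Finset (Fin n))} (h : IsC4Config G S Q) :
    tau G ≤ (Finset.univ \ S).card + Q.card := by
  obtain ⟨m, hm, hle⟩ := tau_le_config' h
  exact le_trans (Nat.sInf_le hm) hle

lemma isC4Config_empty (G : SimpleGraph (Fin n)) : IsC4Config G ∅ ∅ := by
  refine ⟨by simp, by simp, by simp⟩

lemma tauSet_nonempty (G : SimpleGraph (Fin n)) :
    {m | ∃ P' : Fin m → Finset (Fin n) × Finset (Fin n), IsBicliqueDecomp G m P'}.Nonempty := by
  obtain ⟨m, hm, -⟩ := tau_le_config' (isC4Config_empty G)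
  exact ⟨m, hm⟩

end Upper

section Gamma
variable {n : ℕ} {G : SimpleGraph (Fin n)}

lemma no_K23 (hsp : Sp G) {A B : Finset (Fin n)} (hd : Disjoint A B)
    (hadj : ∀ a ∈ A, ∀ b ∈ B, G.Adj a b) : ¬(2 ≤ A.card ∧ 3 ≤ B.card) := by
  rintro ⟨hA, hB⟩
  obtain ⟨A', hA'sub, hA'⟩ := Finset.exists_subset_card_eq hA
  obtain ⟨B', hB'sub, hB'⟩ := Finset.exists_subset_card_eq hB
  have hd' : Disjoint A' B' := hd.mono hA'sub hB'sub
  have hW : (A' ∪ B').card = 5 := by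
    rw [Finset.card_union_of_disjoint hd', hA', hB']
  have := hsp (A' ∪ B') (by omega) (ebf A' B') ?_
  · rw [card_ebf hd', hA', hB', hW] at this; omega
  · intro e he
    obtain ⟨a, ha, b, hb, rfl⟩ := mem_ebf.1 he
    exact ⟨hadj a (hA'sub ha) b (hB'sub hb), ebf_vertex_mem he⟩

lemma sides_eq_two (hsp : Sp G) {A B : Finset (Fin n)} (hd : Disjoint A B)
    (hadj : ∀ a ∈ A, ∀ b ∈ B, G.Adj a b) (hA : A.Nonempty) (hB : B.Nonempty) :
    A.card = 1 ∨ B.card = 1 ∨ (A.card = 2 ∧ B.card = 2) := by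
  have h1 := no_K23 hsp hd hadj
  have h2 := no_K23 hsp hd.symm (fun b hb a ha => G.adj_symm (hadj a ha b hb))
  have hA1 := Finset.card_pos.2 hA
  have hB1 := Finset.card_pos.2 hB
  omega

/-- in a sparse graph a `K_{2,2}` has no extra chords, so it is an induced `C4`. -/
lemma isC4_of_sides (hsp : Sp G) {A B : Finset (Fin n)} (hA : A.card = 2)
    (hB : B.card = 2) (hd : Disjoint A B) (hadj : ∀ a ∈ A, ∀ b ∈ B, G.Adj a b) :
    IsC4 G (A ∪ B) := by
  have hq4 : (A ∪ B).card = 4 := by rw [Finset.card_union_of_disjoint hd, hA, hB]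
  have key : ∀ u v : Fin n, ((u ∈ A ∧ v ∈ A) ∨ (u ∈ B ∧ v ∈ B)) → ¬ G.Adj u v := by
    rintro u v hmem hadj'
    have hne : s(u, v) ∉ ebf A B := by
      intro hc
      obtain ⟨x, hx, y, hy, heq⟩ := mem_ebf.1 hc
      rcases (Sym2.mk_eq_mk_iff (p := (u, v)) (q := (x, y))).1 heq with hh | hh
      · obtain ⟨h1, h2⟩ := Prod.ext_iff.1 hh
        simp only at h1 h2
        subst h1; subst h2
        rcases hmem with ⟨-, hv⟩ | ⟨hu, -⟩
        · exact Finset.disjoint_left.1 hd hv hy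
        · exact Finset.disjoint_left.1 hd hx hu
      · obtain ⟨h1, h2⟩ := Prod.ext_iff.1 hh
        simp only at h1 h2
        subst h1; subst h2
        rcases hmem with ⟨hu, -⟩ | ⟨-, hv⟩
        · exact Finset.disjoint_left.1 hd hu hy
        · exact Finset.disjoint_left.1 hd hx hv
    have hmemq : ∀ w ∈ s(u,v), w ∈ A ∪ B := by
      intro w hw
      rcases Sym2.mem_iff.1 hw with rfl | rfl
      · rcases hmem with ⟨hu, -⟩ | ⟨hu, -⟩
        · exact Finset.mem_union_left _ hu
        · exact Finset.mem_union_right _ hu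
      · rcases hmem with ⟨-, hv⟩ | ⟨-, hv⟩
        · exact Finset.mem_union_left _ hv
        · exact Finset.mem_union_right _ hv
    have := hsp (A ∪ B) (by omega) (insert s(u,v) (ebf A B)) ?_
    · rw [Finset.card_insert_of_notMem hne, card_ebf hd, hA, hB, hq4] at this
      omega
    · intro e he
      rcases Finset.mem_insert.1 he with rfl | he
      · exact ⟨hadj', hmemq⟩
      · obtain ⟨a, ha, b, hb, rfl⟩ := mem_ebf.1 he
        exact ⟨hadj a ha b hb, ebf_vertex_mem he⟩
  refine ⟨hq4, ?_⟩
  intro v hv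
  rcases Finset.mem_union.1 hv with hvA | hvB
  · have : {u ∈ (↑(A ∪ B) : Set (Fin n)) | G.Adj v u} = ↑B := by
      ext u
      simp only [Set.mem_setOf_eq, Finset.coe_union, Set.mem_union, Finset.mem_coe]
      constructor
      · rintro ⟨hu | hu, hadj'⟩
        · exact absurd hadj' (key v u (Or.inl ⟨hvA, hu⟩))
        · exact hu
      · intro hu
        exact ⟨Or.inr hu, hadj v hvA u hu⟩
    rw [this, Set.ncard_coe_finset, hB]
  · have : {u ∈ (↑(A ∪ B) : Set (Fin n)) | G.Adj v u} = ↑A := by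
      ext u
      simp only [Set.mem_setOf_eq, Finset.coe_union, Set.mem_union, Finset.mem_coe]
      constructor
      · rintro ⟨hu | hu, hadj'⟩
        · exact hu
        · exact absurd hadj' (key v u (Or.inr ⟨hvB, hu⟩))
      · intro hu
        exact ⟨Or.inl hu, G.adj_symm (hadj u hu v hvB)⟩
    rw [this, Set.ncard_coe_finset, hA]

/-- distinct `C4` parts of a decomposition are vertex-disjoint in a sparse graph. -/
lemma c4_parts_vertex_disjoint (hsp : Sp G) {A B A' B' : Finset (Fin n)}
    (hA : A.card = 2) (hB : B.card = 2) (hA' : A'.card = 2) (hB' : B'.card = 2)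
    (hd : Disjoint A B) (hd' : Disjoint A' B')
    (hadj : ∀ a ∈ A, ∀ b ∈ B, G.Adj a b) (hadj' : ∀ a ∈ A', ∀ b ∈ B', G.Adj a b)
    (hE : Disjoint (bicliqueEdges A B) (bicliqueEdges A' B')) :
    Disjoint (A ∪ B) (A' ∪ B') := by
  by_contra hcon
  obtain ⟨x, hx1, hx2⟩ := Finset.not_disjoint_iff.1 hcon
  have hEf : Disjoint (ebf A B) (ebf A' B') := by
    rw [Finset.disjoint_left]
    intro e he he'
    have h1 : e ∈ bicliqueEdges A B := by rw [← coe_ebf]; exact he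
    have h2 : e ∈ bicliqueEdges A' B' := by rw [← coe_ebf]; exact he'
    exact Set.disjoint_left.1 hE h1 h2
  have hcardF : (ebf A B ∪ ebf A' B').card = 8 := by
    rw [Finset.card_union_of_disjoint hEf, card_ebf hd, card_ebf hd', hA, hB, hA', hB']
  have hq : (A ∪ B).card = 4 := by rw [Finset.card_union_of_disjoint hd, hA, hB]
  have hq' : (A' ∪ B').card = 4 := by rw [Finset.card_union_of_disjoint hd', hA', hB']
  have hWle : ((A ∪ B) ∪ (A' ∪ B')).card ≤ 7 := by
    have h1 := Finset.card_union_add_card_inter (A ∪ B) (A' ∪ B')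
    have h2 : 0 < ((A ∪ B) ∩ (A' ∪ B')).card :=
      Finset.card_pos.2 ⟨x, Finset.mem_inter.2 ⟨hx1, hx2⟩⟩
    omega
  have := hsp ((A ∪ B) ∪ (A' ∪ B')) hWle (ebf A B ∪ ebf A' B') ?_
  · omega
  · intro e he
    rcases Finset.mem_union.1 he with he | he
    · obtain ⟨a, ha, b, hb, rfl⟩ := mem_ebf.1 he
      refine ⟨hadj a ha b hb, fun v hv => Finset.mem_union_left _ (ebf_vertex_mem he v hv)⟩
    · obtain ⟨a, ha, b, hb, rfl⟩ := mem_ebf.1 he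
      refine ⟨hadj' a ha b hb, fun v hv => Finset.mem_union_right _ (ebf_vertex_mem he v hv)⟩

lemma config_card_le {S : Finset (Fin n)} {Q : Finset (Finset (Fin n))}
    (h : IsC4Config G S Q) : 4 * Q.card ≤ S.card := by
  classical
  have hsub : Q.biUnion id ⊆ S := by
    intro x hx
    obtain ⟨q, hq, hxq⟩ := Finset.mem_biUnion.1 hx
    exact (h.1 q hq).1 hxq
  have hcard : (Q.biUnion id).card = 4 * Q.card := by
    have h1 : (Q.biUnion id).card = ∑ q ∈ Q, (id q).card :=
      Finset.card_biUnion (fun q hq q' hq' hne => h.2.1 q hq q' hq' hne)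
    have h2 : ∀ q ∈ Q, (id q).card = 4 := fun q hq => (h.1 q hq).2.1
    rw [h1, Finset.sum_congr rfl h2, Finset.sum_const, smul_eq_mul, mul_comm]
  calc 4 * Q.card = (Q.biUnion id).card := hcard.symm
    _ ≤ S.card := Finset.card_le_card hsub

lemma gammaMax_bddAbove (G : SimpleGraph (Fin n)) :
    BddAbove {m | ∃ S : Finset (Fin n), ∃ Q : Finset (Finset (Fin n)),
      IsC4Config G S Q ∧ m = S.card - Q.card} := by
  refine ⟨n, ?_⟩
  rintro m ⟨S, Q, h, rfl⟩
  have : S.card ≤ n := by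
    have := Finset.card_le_univ S
    simpa using this
  omega

lemma exists_gammaMax (G : SimpleGraph (Fin n)) :
    ∃ S : Finset (Fin n), ∃ Q : Finset (Finset (Fin n)),
      IsC4Config G S Q ∧ gammaMax G = S.card - Q.card := by
  have hne : {m | ∃ S : Finset (Fin n), ∃ Q : Finset (Finset (Fin n)),
      IsC4Config G S Q ∧ m = S.card - Q.card}.Nonempty :=
    ⟨0, ∅, ∅, isC4Config_empty G, by simp⟩
  have := Nat.sSup_mem hne (gammaMax_bddAbove G)
  exact this

lemma le_gammaMax {S : Finset (Fin n)} {Q : Finset (Finset (Fin n))}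
    (h : IsC4Config G S Q) : S.card - Q.card ≤ gammaMax G :=
  le_csSup (gammaMax_bddAbove G) ⟨S, Q, h, rfl⟩

lemma tau_le_sub (G : SimpleGraph (Fin n)) : tau G ≤ n - gammaMax G := by
  obtain ⟨S, Q, hcfg, hg⟩ := exists_gammaMax G
  have h1 := tau_le_config hcfg
  have h2 : S.card ≤ n := by simpa using Finset.card_le_univ S
  have h3 := config_card_le hcfg
  have h4 : (Finset.univ \ S).card = n - S.card := by
    rw [Finset.card_sdiff_of_subset (Finset.subset_univ S)]
    simp
  rw [h4] at h1
  omega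

end Gamma

section Lower
variable {n : ℕ} {G : SimpleGraph (Fin n)}

lemma gammaMax_ge_of_decomp (hsp : Sp G) {m : ℕ}
    {P : Fin m → Finset (Fin n) × Finset (Fin n)} (hdc : IsBicliqueDecomp G m P) :
    n - m ≤ gammaMax G := by
  classical
  obtain ⟨h1, h2, h3⟩ := hdc
  set isStar : Fin m → Prop := fun i => (P i).1.card = 1 ∨ (P i).2.card = 1 with hisStar
  set isC4p : Fin m → Prop := fun i => ¬ isStar i with hisC4p
  have hclass : ∀ i, isC4p i → (P i).1.card = 2 ∧ (P i).2.card = 2 := by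
    intro i hi
    have := sides_eq_two hsp (h1 i).2.2.1 (h1 i).2.2.2 (h1 i).1 (h1 i).2.1
    rcases this with h | h | h
    · exact absurd (Or.inl h) hi
    · exact absurd (Or.inr h) hi
    · exact h
  set centerSide : Fin m → Finset (Fin n) :=
    fun i => if (P i).1.card = 1 then (P i).1 else (P i).2 with hcs
  have hcs1 : ∀ i, isStar i → (centerSide i).card = 1 := by
    intro i hi
    rcases hi with h | h
    · simp [hcs, h]
    · by_cases h' : (P i).1.card = 1 <;> simp [hcs, h', h]
  have hstar_edge : ∀ i, ∀ e ∈ bicliqueEdges (P i).1 (P i).2,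
      ∃ v ∈ centerSide i, v ∈ e := by
    intro i e he
    obtain ⟨a, ha, b, hb, rfl⟩ := he
    by_cases h' : (P i).1.card = 1
    · refine ⟨a, by simp [hcs, h', ha], by simp⟩
    · have hc : centerSide i = (P i).2 := by simp [hcs, h']
      exact ⟨b, by rw [hc]; exact hb, by simp⟩
  set D0 : Finset (Fin n) := (Finset.univ.filter isStar).biUnion centerSide with hD0
  set q : Fin m → Finset (Fin n) := fun i => (P i).1 ∪ (P i).2 with hqdef
  set del : Fin m → Finset (Fin n) := fun i =>
    if ((P i).1 ∩ D0).Nonempty then (P i).1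
    else if ((P i).2 ∩ D0).Nonempty then (P i).2 else ∅ with hdel
  set D : Finset (Fin n) := D0 ∪ (Finset.univ.filter isC4p).biUnion del with hD
  set S : Finset (Fin n) := Finset.univ \ D with hSdef
  have hdel_sub : ∀ i, del i ⊆ q i := by
    intro i
    rw [hdel, hqdef]
    by_cases hA : ((P i).1 ∩ D0).Nonempty
    · simp only [hA, if_true]; exact Finset.subset_union_left
    · by_cases hB : ((P i).2 ∩ D0).Nonempty
      · simp only [hA, hB, if_true, if_false]; exact Finset.subset_union_right
      · simp [hA, hB]
  have hdel_edge : ∀ i, (del i).Nonempty → ∀ e ∈ bicliqueEdges (P i).1 (P i).2,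
      ∃ v ∈ del i, v ∈ e := by
    intro i hne e he
    obtain ⟨a, ha, b, hb, rfl⟩ := he
    by_cases hA : ((P i).1 ∩ D0).Nonempty
    · refine ⟨a, ?_, by simp⟩; rw [hdel]; simp only [hA, if_true]; exact ha
    · by_cases hB : ((P i).2 ∩ D0).Nonempty
      · refine ⟨b, ?_, by simp⟩; rw [hdel]; simp only [hA, hB, if_true, if_false]; exact hb
      · exfalso; rw [hdel] at hne; simp [hA, hB] at hne
  have hdamaged_del : ∀ i, (q i ∩ D0).Nonempty → (del i).Nonempty := by
    intro i hne
    obtain ⟨x, hx⟩ := hne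
    rw [Finset.mem_inter, hqdef] at hx
    obtain ⟨hxq, hxD0⟩ := hx
    rcases Finset.mem_union.1 hxq with hxA | hxB
    · have hA : ((P i).1 ∩ D0).Nonempty := ⟨x, Finset.mem_inter.2 ⟨hxA, hxD0⟩⟩
      refine ⟨x, ?_⟩; rw [hdel]; simp only [hA, if_true]; exact hxA
    · by_cases hA : ((P i).1 ∩ D0).Nonempty
      · obtain ⟨y, hy⟩ := hA
        refine ⟨y, ?_⟩; rw [hdel]
        have hA' : ((P i).1 ∩ D0).Nonempty := ⟨y, hy⟩
        simp only [hA', if_true]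
        exact (Finset.mem_inter.1 hy).1
      · have hB : ((P i).2 ∩ D0).Nonempty := ⟨x, Finset.mem_inter.2 ⟨hxB, hxD0⟩⟩
        refine ⟨x, ?_⟩; rw [hdel]; simp only [hA, hB, if_true, if_false]; exact hxB
  have hdel_meets_D0 : ∀ i, (del i).Nonempty → (del i ∩ D0).Nonempty := by
    intro i hne
    by_cases hA : ((P i).1 ∩ D0).Nonempty
    · have : del i = (P i).1 := by rw [hdel]; simp only [hA, if_true]
      rw [this]; exact hA
    · by_cases hB : ((P i).2 ∩ D0).Nonempty
      · have : del i = (P i).2 := by rw [hdel]; simp only [hA, hB, if_true, if_false]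
        rw [this]; exact hB
      · exfalso; rw [hdel] at hne; simp [hA, hB] at hne
  have hdel_card : ∀ i, isC4p i → (del i).card ≤ 2 := by
    intro i hi
    have := hclass i hi
    rw [hdel]
    by_cases hA : ((P i).1 ∩ D0).Nonempty
    · simp only [hA, if_true]; omega
    · by_cases hB : ((P i).2 ∩ D0).Nonempty
      · simp only [hA, hB, if_true, if_false]; omega
      · simp [hA, hB]
  -- vertex-disjointness of distinct C4 parts
  have hqdisj : ∀ i j, isC4p i → isC4p j → i ≠ j → Disjoint (q i) (q j) := by
    intro i j hi hj hij
    obtain ⟨hAi, hBi⟩ := hclass i hi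
    obtain ⟨hAj, hBj⟩ := hclass j hj
    exact c4_parts_vertex_disjoint hsp hAi hBi hAj hBj (h1 i).2.2.1 (h1 j).2.2.1
      (h1 i).2.2.2 (h1 j).2.2.2 (h2 i j hij)
  have hqC4 : ∀ i, isC4p i → IsC4 G (q i) := by
    intro i hi
    obtain ⟨hAi, hBi⟩ := hclass i hi
    exact isC4_of_sides hsp hAi hBi (h1 i).2.2.1 (h1 i).2.2.2
  have hdelD : ∀ i, isC4p i → del i ⊆ D := by
    intro i hi
    refine Finset.Subset.trans ?_ Finset.subset_union_right
    exact Finset.subset_biUnion_of_mem del (Finset.mem_filter.2 ⟨Finset.mem_univ _, hi⟩)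
  have hD0D : D0 ⊆ D := Finset.subset_union_left
  set Qs : Finset (Finset (Fin n)) :=
    (Finset.univ.filter (fun i => isC4p i ∧ Disjoint (q i) D)).image q with hQs
  -- endpoints of part edges lie in `q i`
  have hqmem : ∀ i, ∀ e ∈ bicliqueEdges (P i).1 (P i).2, ∀ w ∈ e, w ∈ q i := by
    intro i e he w hw
    rw [← coe_ebf, Finset.mem_coe] at he
    rw [hqdef]
    exact ebf_vertex_mem he w hw
  -- the configuration
  have hcfg : IsC4Config G S Qs := by
    refine ⟨?_, ?_, ?_⟩
    · intro qq hqq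
      obtain ⟨i, hi, rfl⟩ := Finset.mem_image.1 hqq
      obtain ⟨-, hi2, hi3⟩ := Finset.mem_filter.1 hi
      constructor
      · intro x hx
        rw [hSdef, Finset.mem_sdiff]
        exact ⟨Finset.mem_univ _, fun hxD => Finset.disjoint_left.1 hi3 hx hxD⟩
      · exact hqC4 i hi2
    · intro qq hqq qq' hqq' hne
      obtain ⟨i, hi, rfl⟩ := Finset.mem_image.1 hqq
      obtain ⟨j, hj, rfl⟩ := Finset.mem_image.1 hqq'
      have hij : i ≠ j := fun hc => hne (by rw [hc])
      exact hqdisj i j (Finset.mem_filter.1 hi).2.1 (Finset.mem_filter.1 hj).2.1 hij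
    · intro u hu v hv hadj
      have he : s(u, v) ∈ G.edgeSet := hadj
      rw [← h3] at he
      obtain ⟨i, hi⟩ := Set.mem_iUnion.1 he
      have huS : u ∉ D := by
        rw [hSdef, Finset.mem_sdiff] at hu; exact hu.2
      have hvS : v ∉ D := by
        rw [hSdef, Finset.mem_sdiff] at hv; exact hv.2
      have hendD : ∀ w ∈ s(u,v), w ∉ D := by
        intro w hw
        rcases Sym2.mem_iff.1 hw with rfl | rfl
        · exact huS
        · exact hvS
      by_cases hstar : isStar i
      · exfalso
        obtain ⟨w, hw1, hw2⟩ := hstar_edge i _ hi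
        have : w ∈ D0 :=
          Finset.mem_biUnion.2 ⟨i, Finset.mem_filter.2 ⟨Finset.mem_univ _, hstar⟩, hw1⟩
        exact hendD w hw2 (hD0D this)
      · -- C4 part
        have hiC4 : isC4p i := hstar
        have hdisjD : Disjoint (q i) D := by
          rw [Finset.disjoint_left]
          intro x hxq hxD
          rcases Finset.mem_union.1 hxD with hxD0 | hxdel
          · -- q i meets D0, so del i is nonempty and every part edge meets del i ⊆ D
            have hne' : (del i).Nonempty :=
              hdamaged_del i ⟨x, Finset.mem_inter.2 ⟨hxq, hxD0⟩⟩
            obtain ⟨w, hw1, hw2⟩ := hdel_edge i hne' _ hi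
            exact hendD w hw2 (hdelD i hiC4 hw1)
          · obtain ⟨j, hj, hxj⟩ := Finset.mem_biUnion.1 hxdel
            have hjC4 : isC4p j := (Finset.mem_filter.1 hj).2
            by_cases hij : i = j
            · subst hij
              obtain ⟨w, hw1, hw2⟩ := hdel_edge i ⟨x, hxj⟩ _ hi
              exact hendD w hw2 (hdelD i hiC4 hw1)
            · exact Finset.disjoint_left.1 (hqdisj i j hiC4 hjC4 hij) hxq (hdel_sub j hxj)
        refine ⟨q i, Finset.mem_image.2 ⟨i, Finset.mem_filter.2
          ⟨Finset.mem_univ _, hiC4, hdisjD⟩, rfl⟩, ?_, ?_⟩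
        · exact hqmem i _ hi u (by simp)
        · exact hqmem i _ hi v (by simp)
  -- counting
  have hDcard : D.card ≤ (Finset.univ.filter isStar).card +
      (Finset.univ.filter (fun i => isC4p i ∧ (del i).Nonempty)).card := by
    have hD0card : D0.card ≤ (Finset.univ.filter isStar).card := by
      calc D0.card ≤ ∑ i ∈ Finset.univ.filter isStar, (centerSide i).card :=
            Finset.card_biUnion_le
        _ = ∑ i ∈ Finset.univ.filter isStar, 1 :=
            Finset.sum_congr rfl (fun i hi => hcs1 i (Finset.mem_filter.1 hi).2)
        _ = (Finset.univ.filter isStar).card := by simp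
    set X : Finset (Fin n) := (Finset.univ.filter isC4p).biUnion del with hX
    have hDeq : D.card = (X \ D0).card + D0.card := by
      rw [hD, Finset.union_comm]
      exact (Finset.card_sdiff_add_card X D0).symm ▸ rfl
    have hXsub : X \ D0 ⊆ (Finset.univ.filter isC4p).biUnion (fun i => del i \ D0) := by
      intro x hx
      obtain ⟨hxX, hxD0⟩ := Finset.mem_sdiff.1 hx
      obtain ⟨i, hi, hxi⟩ := Finset.mem_biUnion.1 hxX
      exact Finset.mem_biUnion.2 ⟨i, hi, Finset.mem_sdiff.2 ⟨hxi, hxD0⟩⟩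
    have hterm : ∀ i, isC4p i → (del i \ D0).card ≤ if (del i).Nonempty then 1 else 0 := by
      intro i hi
      by_cases hne' : (del i).Nonempty
      · simp only [hne', if_true]
        obtain ⟨y, hy⟩ := hdel_meets_D0 i hne'
        obtain ⟨hy1, hy2⟩ := Finset.mem_inter.1 hy
        have hsub : del i \ D0 ⊆ del i \ {y} := by
          intro z hz
          obtain ⟨hz1, hz2⟩ := Finset.mem_sdiff.1 hz
          exact Finset.mem_sdiff.2 ⟨hz1, fun hc => hz2 (Finset.mem_singleton.1 hc ▸ hy2)⟩
        calc (del i \ D0).card ≤ (del i \ {y}).card := Finset.card_le_card hsub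
          _ = (del i).card - 1 := by
              rw [Finset.sdiff_singleton_eq_erase, Finset.card_erase_of_mem hy1]
          _ ≤ 1 := by have := hdel_card i hi; omega
      · simp only [hne', if_false]
        rw [Finset.not_nonempty_iff_eq_empty.1 hne']
        simp
    have hXcard : (X \ D0).card ≤
        (Finset.univ.filter (fun i => isC4p i ∧ (del i).Nonempty)).card := by
      calc (X \ D0).card ≤ ∑ i ∈ Finset.univ.filter isC4p, (del i \ D0).card :=
            le_trans (Finset.card_le_card hXsub) Finset.card_biUnion_le
        _ ≤ ∑ i ∈ Finset.univ.filter isC4p, (if (del i).Nonempty then 1 else 0) :=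
            Finset.sum_le_sum (fun i hi => hterm i (Finset.mem_filter.1 hi).2)
        _ = ((Finset.univ.filter isC4p).filter (fun i => (del i).Nonempty)).card :=
            (Finset.card_filter _ _).symm
        _ = (Finset.univ.filter (fun i => isC4p i ∧ (del i).Nonempty)).card := by
            rw [Finset.filter_filter]
    omega
  have hQscard : Qs.card ≤
      (Finset.univ.filter (fun i => isC4p i ∧ ¬(del i).Nonempty)).card := by
    calc Qs.card ≤ (Finset.univ.filter (fun i => isC4p i ∧ Disjoint (q i) D)).card :=
          Finset.card_image_le
      _ ≤ _ := by
          apply Finset.card_le_card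
          intro i hi
          obtain ⟨hi1, hi2, hi3⟩ := Finset.mem_filter.1 hi
          refine Finset.mem_filter.2 ⟨Finset.mem_univ _, hi2, fun hne' => ?_⟩
          obtain ⟨y, hy⟩ := hne'
          exact Finset.disjoint_left.1 hi3 (hdel_sub i hy) (hdelD i hi2 hy)
  have hsc : (Finset.univ.filter isStar).card + (Finset.univ.filter isC4p).card = m := by
    have := Finset.card_filter_add_card_filter_not
      (s := (Finset.univ : Finset (Fin m))) (p := isStar)
    simpa [hisC4p] using this
  have hdu : (Finset.univ.filter (fun i => isC4p i ∧ (del i).Nonempty)).card +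
      (Finset.univ.filter (fun i => isC4p i ∧ ¬(del i).Nonempty)).card =
      (Finset.univ.filter isC4p).card := by
    have := Finset.card_filter_add_card_filter_not
      (s := Finset.univ.filter isC4p) (p := fun i => (del i).Nonempty)
    rw [Finset.filter_filter, Finset.filter_filter] at this
    exact this
  have hScard : S.card = n - D.card := by
    rw [hSdef, Finset.card_sdiff_of_subset (Finset.subset_univ D)]
    simp
  have hDn : D.card ≤ n := by simpa using Finset.card_le_univ D
  have hgm := le_gammaMax hcfg
  omega

lemma tau_eq_of_sp (hsp : Sp G) : tau G = n - gammaMax G := by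
  have hub := tau_le_sub G
  have hmem := Nat.sInf_mem (tauSet_nonempty G)
  obtain ⟨P, hP⟩ := hmem
  have hlb : n - tau G ≤ gammaMax G := gammaMax_ge_of_decomp hsp hP
  have hgn : gammaMax G ≤ n := by
    obtain ⟨S, Q, hcfg, hg⟩ := exists_gammaMax G
    have : S.card ≤ n := by simpa using Finset.card_le_univ S
    omega
  omega

end Lower

section Prob

lemma coe_toNNReal_eq (p : ℝ) : (p.toNNReal : ENNReal) = ENNReal.ofReal p := rfl

lemma bernoulli_univ {p : ℝ} (h0 : 0 ≤ p) (h1 : p ≤ 1) :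
    bernoulliBool p Set.univ = 1 := by
  simp only [bernoulliBool, Measure.add_apply, Measure.smul_apply,
    Measure.dirac_apply_of_mem (Set.mem_univ _), ENNReal.smul_def, smul_eq_mul, mul_one]
  rw [coe_toNNReal_eq, coe_toNNReal_eq, ← ENNReal.ofReal_add h0 (by linarith)]
  norm_num

lemma bernoulli_isProb {p : ℝ} (h0 : 0 ≤ p) (h1 : p ≤ 1) :
    IsProbabilityMeasure (bernoulliBool p) :=
  ⟨bernoulli_univ h0 h1⟩

lemma bernoulli_true (p : ℝ) :
    bernoulliBool p {true} = ENNReal.ofReal p := by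
  simp only [bernoulliBool, Measure.add_apply, Measure.smul_apply,
    ENNReal.smul_def, smul_eq_mul, Measure.dirac_apply]
  simp [coe_toNNReal_eq]

lemma erdosRenyi_isProb (n : ℕ) {p : ℝ} (h0 : 0 ≤ p) (h1 : p ≤ 1) :
    IsProbabilityMeasure (erdosRenyi n p) := by
  haveI : ∀ (e : Sym2 (Fin n)), IsProbabilityMeasure (bernoulliBool p) :=
    fun _ => bernoulli_isProb h0 h1
  unfold erdosRenyi
  infer_instance

lemma prob_all_true (n : ℕ) {p : ℝ} (h0 : 0 ≤ p) (h1 : p ≤ 1)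
    (F : Finset (Sym2 (Fin n))) :
    erdosRenyi n p {ω | ∀ e ∈ F, ω e = true} = (ENNReal.ofReal p) ^ F.card := by
  classical
  have hset : {ω : Sym2 (Fin n) → Bool | ∀ e ∈ F, ω e = true} =
      Set.univ.pi (fun e => if e ∈ F then ({true} : Set Bool) else Set.univ) := by
    ext ω
    simp only [Set.mem_setOf_eq, Set.mem_pi, Set.mem_univ, forall_true_left]
    constructor
    · intro h e
      by_cases he : e ∈ F
      · simp [he, h e he]
      · simp [he]
    · intro h e he
      have := h e
      rw [if_pos he] at this
      exact this
  rw [hset]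
  unfold erdosRenyi
  rw [Measure.pi_pi]
  have : ∀ e : Sym2 (Fin n),
      bernoulliBool p (if e ∈ F then ({true} : Set Bool) else Set.univ) =
      if e ∈ F then ENNReal.ofReal p else 1 := by
    intro e
    by_cases he : e ∈ F
    · rw [if_pos he, if_pos he, bernoulli_true]
    · rw [if_neg he, if_neg he, bernoulli_univ h0 h1]
  rw [Finset.prod_congr rfl (fun e _ => this e)]
  rw [Finset.prod_ite_mem, Finset.univ_inter, Finset.prod_const]

end Prob

section Union
open Finset

lemma Nw_le {n w : ℕ} (hw : w ≤ 7)
    (idx : Finset (Finset (Fin n) × Finset (Sym2 (Fin n))))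
    (hidx : ∀ WF ∈ idx, (∀ e ∈ WF.2, ∀ v ∈ e, v ∈ WF.1)) :
    (idx.filter (fun WF => WF.1.card = w)).card ≤ n ^ w * 2 ^ 28 := by
  classical
  have hsub : idx.filter (fun WF => WF.1.card = w) ⊆
      (Finset.univ.powersetCard w).biUnion
        (fun W => (W.sym2.powerset).image (fun F => (W, F))) := by
    intro WF hWF
    obtain ⟨hWF1, hWF2⟩ := Finset.mem_filter.1 hWF
    refine Finset.mem_biUnion.2 ⟨WF.1, ?_, ?_⟩
    · exact Finset.mem_powersetCard.2 ⟨Finset.subset_univ _, hWF2⟩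
    · refine Finset.mem_image.2 ⟨WF.2, ?_, rfl⟩
      refine Finset.mem_powerset.2 ?_
      intro e he
      exact Finset.mem_sym2_iff.2 (fun a ha => hidx WF hWF1 e he a ha)
  calc (idx.filter (fun WF => WF.1.card = w)).card
      ≤ ((Finset.univ.powersetCard w).biUnion
          (fun W => (W.sym2.powerset).image (fun F => (W, F)))).card :=
        Finset.card_le_card hsub
    _ ≤ ∑ W ∈ Finset.univ.powersetCard w,
          ((W.sym2.powerset).image (fun F => (W, F))).card := Finset.card_biUnion_le
    _ ≤ ∑ W ∈ Finset.univ.powersetCard w, 2 ^ 28 := by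
        apply Finset.sum_le_sum
        intro W hW
        have hWc : W.card = w := (Finset.mem_powersetCard.1 hW).2
        calc ((W.sym2.powerset).image (fun F => (W, F))).card
            ≤ (W.sym2.powerset).card := Finset.card_image_le
          _ = 2 ^ (W.sym2.card) := Finset.card_powerset _
          _ ≤ 2 ^ 28 := by
              apply Nat.pow_le_pow_right (by norm_num)
              rw [Finset.card_sym2, hWc]
              calc (w + 1).choose 2 ≤ (8 : ℕ).choose 2 :=
                    Nat.choose_le_choose 2 (by omega)
                _ = 28 := by decide
    _ = (Finset.univ.powersetCard w).card * 2 ^ 28 := by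
        rw [Finset.sum_const, smul_eq_mul]
    _ ≤ n ^ w * 2 ^ 28 := by
        have h1 : (((Finset.univ : Finset (Fin n))).powersetCard w).card = n.choose w := by
          simp [Finset.card_powersetCard]
        rw [h1]
        exact Nat.mul_le_mul_right _ (Nat.choose_le_pow n w)

lemma bad_measure_le (n : ℕ) {p : ℝ} (h0 : 0 ≤ p) (h1 : p ≤ 1) :
    erdosRenyi n p {ω | ¬ Sp (graphOf n ω)} ≤
      ∑ w ∈ Finset.range 8, ((n ^ w * 2 ^ 28 : ℕ) : ENNReal) * ENNReal.ofReal p ^ (w + 1) := by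
  classical
  set idx : Finset (Finset (Fin n) × Finset (Sym2 (Fin n))) :=
    Finset.univ.filter (fun WF => WF.1.card ≤ 7 ∧ WF.2.card = WF.1.card + 1 ∧
      ∀ e ∈ WF.2, ¬ e.IsDiag ∧ ∀ v ∈ e, v ∈ WF.1) with hidxdef
  have hsub : {ω : Sym2 (Fin n) → Bool | ¬ Sp (graphOf n ω)} ⊆
      ⋃ WF ∈ idx, {ω : Sym2 (Fin n) → Bool | ∀ e ∈ WF.2, ω e = true} := by
    intro ω hω
    simp only [Set.mem_setOf_eq] at hω
    unfold Sp at hω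
    push_neg at hω
    obtain ⟨W, hW7, F, hF, hFc⟩ := hω
    obtain ⟨F', hF'sub, hF'card⟩ := Finset.exists_subset_card_eq (show W.card + 1 ≤ F.card by omega)
    have hprop : ∀ e ∈ F', (ω e = true ∧ ¬ e.IsDiag) ∧ ∀ v ∈ e, v ∈ W := by
      intro e he
      have := hF e (hF'sub he)
      obtain ⟨hedge, hvW⟩ := this
      unfold graphOf at hedge
      rw [SimpleGraph.edgeSet_fromEdgeSet] at hedge
      obtain ⟨h1', h2'⟩ := hedge
      exact ⟨⟨h1', h2'⟩, hvW⟩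
    refine Set.mem_iUnion₂.2 ⟨(W, F'), ?_, ?_⟩
    · refine Finset.mem_filter.2 ⟨Finset.mem_univ _, hW7, hF'card, ?_⟩
      intro e he
      exact ⟨(hprop e he).1.2, (hprop e he).2⟩
    · intro e he
      exact (hprop e he).1.1
  calc erdosRenyi n p {ω | ¬ Sp (graphOf n ω)}
      ≤ erdosRenyi n p (⋃ WF ∈ idx, {ω : Sym2 (Fin n) → Bool | ∀ e ∈ WF.2, ω e = true}) :=
        measure_mono hsub
    _ ≤ ∑ WF ∈ idx, erdosRenyi n p {ω : Sym2 (Fin n) → Bool | ∀ e ∈ WF.2, ω e = true} :=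
        measure_biUnion_finset_le _ _
    _ = ∑ WF ∈ idx, ENNReal.ofReal p ^ (WF.1.card + 1) := by
        apply Finset.sum_congr rfl
        intro WF hWF
        rw [prob_all_true n h0 h1 WF.2]
        have : WF.2.card = WF.1.card + 1 := (Finset.mem_filter.1 hWF).2.2.1
        rw [this]
    _ = ∑ w ∈ Finset.range 8, ∑ WF ∈ idx.filter (fun WF => WF.1.card = w),
          ENNReal.ofReal p ^ (WF.1.card + 1) := by
        symm
        apply Finset.sum_fiberwise_of_maps_to
        intro WF hWF
        have : WF.1.card ≤ 7 := (Finset.mem_filter.1 hWF).2.1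
        exact Finset.mem_range.2 (by omega)
    _ ≤ ∑ w ∈ Finset.range 8, ((n ^ w * 2 ^ 28 : ℕ) : ENNReal) * ENNReal.ofReal p ^ (w + 1) := by
        apply Finset.sum_le_sum
        intro w hw
        have hw7 : w ≤ 7 := by
          have := Finset.mem_range.1 hw; omega
        have hNw := Nw_le hw7 idx (fun WF hWF e he v hv =>
          ((Finset.mem_filter.1 hWF).2.2.2 e he).2 v hv)
        calc ∑ WF ∈ idx.filter (fun WF => WF.1.card = w),
              ENNReal.ofReal p ^ (WF.1.card + 1)
            = ∑ WF ∈ idx.filter (fun WF => WF.1.card = w), ENNReal.ofReal p ^ (w + 1) := by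
              apply Finset.sum_congr rfl
              intro WF hWF
              rw [(Finset.mem_filter.1 hWF).2]
          _ = ((idx.filter (fun WF => WF.1.card = w)).card : ENNReal) *
                ENNReal.ofReal p ^ (w + 1) := by
              rw [Finset.sum_const, nsmul_eq_mul]
          _ ≤ ((n ^ w * 2 ^ 28 : ℕ) : ENNReal) * ENNReal.ofReal p ^ (w + 1) := by
              apply mul_le_mul_left
              exact_mod_cast Nat.cast_le.2 hNw

end Union

section Final

lemma term_tendsto (p : ℕ → ℝ) (hp : ∀ n, 0 ≤ p n ∧ p n ≤ 1)
    (hsparse : Tendsto (fun n => p n * (n : ℝ) ^ ((7 : ℝ) / 8)) atTop (nhds 0))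
    {w : ℕ} (hw : w ≤ 7) :
    Tendsto (fun n => ((n ^ w * 2 ^ 28 : ℕ) : ℝ) * p n ^ (w + 1)) atTop (nhds 0) := by
  have hupper : Tendsto (fun n => (2 : ℝ) ^ 28 * (p n * (n : ℝ) ^ ((7 : ℝ) / 8)) ^ (w + 1))
      atTop (nhds 0) := by
    have h1 : Tendsto (fun n => (p n * (n : ℝ) ^ ((7 : ℝ) / 8)) ^ (w + 1)) atTop
        (nhds (0 ^ (w + 1))) := hsparse.pow (w + 1)
    rw [zero_pow (Nat.succ_ne_zero w)] at h1
    simpa using h1.const_mul ((2 : ℝ) ^ 28)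
  apply tendsto_of_tendsto_of_tendsto_of_le_of_le' tendsto_const_nhds hupper
  · filter_upwards with n
    have h := (hp n).1
    positivity
  · filter_upwards [eventually_ge_atTop 1] with n hn
    have hn0 : (0 : ℝ) ≤ (n : ℝ) := Nat.cast_nonneg n
    have hn1 : (1 : ℝ) ≤ (n : ℝ) := by exact_mod_cast hn
    have hpow : ((n : ℝ) ^ w : ℝ) ≤ ((n : ℝ) ^ ((7 : ℝ) / 8)) ^ (w + 1) := by
      rw [← Real.rpow_natCast ((n : ℝ) ^ ((7 : ℝ) / 8)) (w + 1),
        ← Real.rpow_natCast (n : ℝ) w, ← Real.rpow_mul hn0]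
      apply Real.rpow_le_rpow_of_exponent_le hn1
      have : (w : ℝ) ≤ 7 := by exact_mod_cast hw
      push_cast
      linarith
    have hp0 : (0 : ℝ) ≤ p n := (hp n).1
    have hppow : (0 : ℝ) ≤ p n ^ (w + 1) := by positivity
    calc ((n ^ w * 2 ^ 28 : ℕ) : ℝ) * p n ^ (w + 1)
        = (2 : ℝ) ^ 28 * ((n : ℝ) ^ w * p n ^ (w + 1)) := by push_cast; ring
      _ ≤ (2 : ℝ) ^ 28 * (((n : ℝ) ^ ((7 : ℝ) / 8)) ^ (w + 1) * p n ^ (w + 1)) := by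
          apply mul_le_mul_of_nonneg_left _ (by positivity)
          exact mul_le_mul_of_nonneg_right hpow hppow
      _ = (2 : ℝ) ^ 28 * (p n * (n : ℝ) ^ ((7 : ℝ) / 8)) ^ (w + 1) := by
          rw [mul_pow]; ring

lemma bad_tendsto (p : ℕ → ℝ) (hp : ∀ n, 0 ≤ p n ∧ p n ≤ 1)
    (hsparse : Tendsto (fun n => p n * (n : ℝ) ^ ((7 : ℝ) / 8)) atTop (nhds 0)) :
    Tendsto (fun n => erdosRenyi n (p n) {ω | ¬ Sp (graphOf n ω)}) atTop (nhds 0) := by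
  set B : ℕ → ℝ := fun n => ∑ w ∈ Finset.range 8, ((n ^ w * 2 ^ 28 : ℕ) : ℝ) * p n ^ (w + 1)
    with hB
  have hBnonneg : ∀ n, ∀ w ∈ Finset.range 8, (0:ℝ) ≤ ((n ^ w * 2 ^ 28 : ℕ) : ℝ) * p n ^ (w + 1) := by
    intro n w hw
    have := (hp n).1
    positivity
  have hBtend : Tendsto B atTop (nhds 0) := by
    rw [hB]
    have : Tendsto (fun n => ∑ w ∈ Finset.range 8,
        ((n ^ w * 2 ^ 28 : ℕ) : ℝ) * p n ^ (w + 1)) atTop (nhds (∑ w ∈ Finset.range 8, 0)) := by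
      apply tendsto_finset_sum
      intro w hw
      exact term_tendsto p hp hsparse (by have := Finset.mem_range.1 hw; omega)
    simpa using this
  have hle : ∀ n, erdosRenyi n (p n) {ω | ¬ Sp (graphOf n ω)} ≤ ENNReal.ofReal (B n) := by
    intro n
    refine le_trans (bad_measure_le n (hp n).1 (hp n).2) ?_
    rw [hB, ENNReal.ofReal_sum_of_nonneg (hBnonneg n)]
    apply Finset.sum_le_sum
    intro w hw
    rw [ENNReal.ofReal_mul (by positivity), ENNReal.ofReal_natCast,
      ENNReal.ofReal_pow (hp n).1]
  exact tendsto_of_tendsto_of_tendsto_of_le_of_le (g := fun _ => (0 : ENNReal))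
    (h := fun n => ENNReal.ofReal (B n)) tendsto_const_nhds
    (by simpa using ENNReal.tendsto_ofReal hBtend) (fun n => zero_le) hle

end Final

/-- if `p·n^{7/8} → 0` then whp `τ(G(n,p)) = n - max γ(H)`. -/
theorem tau_very_sparse (p : ℕ → ℝ) (hp : ∀ n, 0 ≤ p n ∧ p n ≤ 1)
    (hsparse : Tendsto (fun n => p n * (n : ℝ) ^ ((7 : ℝ) / 8)) atTop (nhds 0)) :
    Tendsto (fun n => erdosRenyi n (p n)
      {ω | tau (graphOf n ω) = n - gammaMax (graphOf n ω)}) atTop (nhds 1) := by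
  have hbad := bad_tendsto p hp hsparse
  set E : (n : ℕ) → Set (Sym2 (Fin n) → Bool) :=
    fun n => {ω | tau (graphOf n ω) = n - gammaMax (graphOf n ω)} with hE
  have hcompl_le : ∀ n, erdosRenyi n (p n) (E n)ᶜ ≤
      erdosRenyi n (p n) {ω | ¬ Sp (graphOf n ω)} := by
    intro n
    apply measure_mono
    intro ω hω
    simp only [hE, Set.mem_compl_iff, Set.mem_setOf_eq] at hω ⊢
    intro hSp
    exact hω (tau_eq_of_sp hSp)
  have hcompl : Tendsto (fun n => erdosRenyi n (p n) (E n)ᶜ) atTop (nhds 0) := by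
    exact tendsto_of_tendsto_of_tendsto_of_le_of_le (g := fun _ => (0 : ENNReal))
      tendsto_const_nhds hbad (fun n => zero_le) hcompl_le
  have hkey : ∀ n, erdosRenyi n (p n) (E n) = 1 - erdosRenyi n (p n) (E n)ᶜ := by
    intro n
    haveI := erdosRenyi_isProb n (hp n).1 (hp n).2
    have hmeas : MeasurableSet ((E n)ᶜ) := (Set.to_countable _).measurableSet
    conv_lhs => rw [← compl_compl (E n)]
    rw [prob_compl_eq_one_sub hmeas]
  have : Tendsto (fun n => 1 - erdosRenyi n (p n) (E n)ᶜ) atTop (nhds (1 - 0)) :=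
    ENNReal.Tendsto.sub tendsto_const_nhds hcompl (Or.inl ENNReal.one_ne_top)
  rw [tsub_zero] at this
  exact this.congr (fun n => (hkey n).symm)

end RandomBipartiteDecomposition
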